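/- Let (ψ_j)_{j∈J} be a C-controlled Bessel sequence in a Hilbert space H with bound B, where C is positive invertible, C commutes with the controlled frame operator S_C, and R(S_C^(1/2)) ⊆ R((C S_C)^(1/2)). Then the synthesis operator U : ℓ²(J) → H defined by U((a_j)) = ∑_j a_j C ψ_j is a well-defined bounded operator with ‖U‖ ≤ √B · ‖C^(1/2)‖. -/

import Mathlib

open ContinuousLinearMap
open scoped ComplexOrder NNReal ENNReal

set_option synthInstance.maxHeartbeats 1000000
set_option maxHeartbeats 1000000

lemma aux_cfc_mem_elemental {A : Type*} [CStarAlgebra A] (a : A) (f : ℂ → ℂ) :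
    cfc f a ∈ StarAlgebra.elemental ℂ a := by
  refine cfc_cases (· ∈ StarAlgebra.elemental ℂ a) a f (zero_mem _) fun hf ha ↦ ?_
  rw [cfcHom_eq_of_isStarNormal]
  exact Subtype.coe_prop _

/-- The commutant of a selfadjoint operator as a star subalgebra. -/
def auxCommutantSA {H : Type*} [NormedAddCommGroup H] [InnerProductSpace ℂ H] [CompleteSpace H]
    (T : H →L[ℂ] H) (hT : IsSelfAdjoint T) : StarSubalgebra ℂ (H →L[ℂ] H) where
  carrier := {x | Commute T x}
  mul_mem' := fun h1 h2 => h1.mul_right h2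
  add_mem' := fun h1 h2 => h1.add_right h2
  algebraMap_mem' := fun r => (Algebra.commutes r T).symm
  star_mem' := by
    intro x hx
    have := congrArg star hx.symm
    have h : T * star x = star x * T := by simpa [star_mul, hT.star_eq] using this
    exact h

lemma aux_commute_sqrt {H : Type*} [NormedAddCommGroup H] [InnerProductSpace ℂ H]
    [CompleteSpace H] (C SC sqrtC : H →L[ℂ] H)
    (hC : C.IsPositive)
    (hsqrtC_pos : sqrtC.IsPositive) (hsqrtC_sq : sqrtC * sqrtC = C)
    (hSCsa : IsSelfAdjoint SC)
    (hcomm : C * SC = SC * C) : Commute SC sqrtC := by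
  have hCnn : (0:H →L[ℂ] H) ≤ C := (nonneg_iff_isPositive C).mpr hC
  have hsnn : (0:H →L[ℂ] H) ≤ sqrtC := (nonneg_iff_isPositive sqrtC).mpr hsqrtC_pos
  have h1 : sqrtC = CFC.sqrt C := (CFC.sqrt_unique hsqrtC_sq hsnn).symm
  have h2 : sqrtC = cfc (fun z : ℂ => ((NNReal.sqrt (z.re.toNNReal) : ℝ) : ℂ)) C := by
    rw [h1, CFC.sqrt_eq_cfc, cfc_nnreal_eq_real _ _ hCnn,
      cfc_real_eq_complex _ (IsSelfAdjoint.of_nonneg hCnn)]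
  have hmem : sqrtC ∈ StarAlgebra.elemental ℂ C := h2 ▸ aux_cfc_mem_elemental C _
  have hclosed : IsClosed ((auxCommutantSA SC hSCsa : StarSubalgebra ℂ (H →L[ℂ] H)) :
      Set (H →L[ℂ] H)) := by
    have : ((auxCommutantSA SC hSCsa : StarSubalgebra ℂ (H →L[ℂ] H)) : Set (H →L[ℂ] H))
        = {x | SC * x = x * SC} := rfl
    rw [this]
    exact isClosed_eq (by fun_prop) (by fun_prop)
  have hCm : C ∈ auxCommutantSA SC hSCsa := hcomm.symm
  exact StarAlgebra.elemental.le_of_mem hclosed hCm hmem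

/-- For a `C`-controlled Bessel sequence with bound `B`, the synthesis operator
`U(a) = ∑_j a_j C ψ_j` is well defined and bounded with `‖U‖ ≤ √B ‖C^(1/2)‖`. -/
theorem stmt_5 {H : Type*} [NormedAddCommGroup H] [InnerProductSpace ℂ H] [CompleteSpace H]
    {J : Type*} [Countable J] (C SC sqrtC sqrtSC sqrtCSC : H →L[ℂ] H) (ψ : J → H)
    (hC : C.IsPositive) (hCinv : IsUnit C)
    (hsqrtC_pos : sqrtC.IsPositive) (hsqrtC_sq : sqrtC * sqrtC = C)
    (B : ℝ) (hB : 0 < B)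
    (hsum : ∀ f : H, Summable fun j => (inner ℂ f (ψ j) : ℂ) * (inner ℂ (C (ψ j)) f : ℂ))
    (hBessel : ∀ f : H,
      (∑' j, (inner ℂ f (ψ j) : ℂ) * (inner ℂ (C (ψ j)) f : ℂ)) ≤ (B : ℂ) * inner ℂ f f)
    (hSC : ∀ f : H, HasSum (fun j => (inner ℂ (ψ j) f : ℂ) • C (ψ j)) (SC f))
    (hcomm : C * SC = SC * C)
    (hsqrtSC_pos : sqrtSC.IsPositive) (hsqrtSC_sq : sqrtSC * sqrtSC = SC)
    (hsqrtCSC_pos : sqrtCSC.IsPositive) (hsqrtCSC_sq : sqrtCSC * sqrtCSC = C * SC)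
    (hrange : Set.range sqrtSC ⊆ Set.range sqrtCSC) :
    ∃ U : lp (fun _ : J => ℂ) 2 →L[ℂ] H,
      (∀ a : lp (fun _ : J => ℂ) 2, HasSum (fun j => a j • C (ψ j)) (U a)) ∧
        ‖U‖ ≤ Real.sqrt B * ‖sqrtC‖ := by
  classical
  set K := Real.sqrt B * ‖sqrtC‖ with hKdef
  have hK : 0 ≤ K := mul_nonneg (Real.sqrt_nonneg _) (norm_nonneg _)
  -- SC is selfadjoint (it is positive, being the square of a positive operator)
  have hSCsa : IsSelfAdjoint SC := by
    rw [← hsqrtSC_sq]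
    show star _ = _
    rw [star_mul, hsqrtSC_pos.isSelfAdjoint.star_eq]
  have hTcomm : Commute SC sqrtC := aux_commute_sqrt C SC sqrtC hC hsqrtC_pos hsqrtC_sq hSCsa hcomm
  have hCsa : ∀ x y : H, (inner ℂ (C x) y : ℂ) = inner ℂ x (C y) := fun x y => by
    have := adjoint_inner_left C y x
    rwa [hC.isSelfAdjoint.adjoint_eq] at this
  have hTsa : ∀ x y : H, (inner ℂ (sqrtC x) y : ℂ) = inner ℂ x (sqrtC y) := fun x y => by
    have := adjoint_inner_left sqrtC y x
    rwa [hsqrtC_pos.isSelfAdjoint.adjoint_eq] at this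
  -- Key analysis estimate: the full sum of |⟨Cψ_j, f⟩|² exists and is bounded.
  have hfull : ∀ f : H, ∃ m : ℝ, HasSum (fun j => ‖(inner ℂ (C (ψ j)) f : ℂ)‖^2) m ∧
      m ≤ B * ‖sqrtC‖^2 * ‖f‖^2 := by
    intro f
    refine ⟨Complex.re (inner ℂ f (SC (C f))), ?_, ?_⟩
    · have h := (hSC (C f)).mapL (innerSL ℂ f)
      have heq : (fun j => (innerSL ℂ f) ((inner ℂ (ψ j) (C f) : ℂ) • C (ψ j)))
          = fun j => (((‖(inner ℂ (C (ψ j)) f : ℂ)‖^2 : ℝ) : ℂ)) := by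
        funext j
        simp only [innerSL_apply_apply, inner_smul_right]
        rw [show (inner ℂ (ψ j) (C f) : ℂ) = inner ℂ (C (ψ j)) f from (hCsa (ψ j) f).symm,
          ← inner_conj_symm f (C (ψ j)), RCLike.mul_conj]
        norm_cast
      rw [heq] at h
      have h2 := h.mapL Complex.reCLM
      simpa only [Complex.reCLM_apply, Complex.ofReal_re, innerSL_apply_apply] using h2
    · set g := sqrtC f with hg
      have e1 : SC (C f) = C (SC f) := by
        have := congrArg (fun T : H →L[ℂ] H => T f) hcomm
        simpa [ContinuousLinearMap.mul_apply] using this.symm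
      have e2 : (inner ℂ f (SC (C f)) : ℂ) = inner ℂ g (SC g) := by
        rw [e1]
        have : C (SC f) = sqrtC (sqrtC (SC f)) := by
          rw [← hsqrtC_sq]; simp [ContinuousLinearMap.mul_apply]
        rw [this, ← hTsa f (sqrtC (SC f))]
        congr 1
        have := congrArg (fun T : H →L[ℂ] H => T f) hTcomm.eq
        simpa [ContinuousLinearMap.mul_apply] using this.symm
      rw [e2]
      have h3 := (hSC g).mapL (innerSL ℂ g)
      have h4 : (fun j => (innerSL ℂ g) ((inner ℂ (ψ j) g : ℂ) • C (ψ j)))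
          = fun j => (starRingEnd ℂ) ((inner ℂ g (ψ j) : ℂ) * (inner ℂ (C (ψ j)) g : ℂ)) := by
        funext j
        simp only [innerSL_apply_apply, inner_smul_right, map_mul, inner_conj_symm]
      rw [h4] at h3
      have h5 : HasSum (fun j => (starRingEnd ℂ) ((inner ℂ g (ψ j) : ℂ) * (inner ℂ (C (ψ j)) g : ℂ)))
          ((starRingEnd ℂ) (∑' j, (inner ℂ g (ψ j) : ℂ) * (inner ℂ (C (ψ j)) g : ℂ))) :=
        ((hsum g).hasSum).star
      have h6 : (inner ℂ g (SC g) : ℂ)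
          = (starRingEnd ℂ) (∑' j, (inner ℂ g (ψ j) : ℂ) * (inner ℂ (C (ψ j)) g : ℂ)) :=
        h3.unique h5
      have h7 := hBessel g
      rw [Complex.le_def] at h7
      have h8 : Complex.re ((B : ℂ) * inner ℂ g g) = B * ‖g‖^2 := by
        simp [Complex.mul_re, ← inner_self_eq_norm_sq (𝕜 := ℂ) g]
      calc Complex.re (inner ℂ g (SC g) : ℂ)
          = Complex.re (∑' j, (inner ℂ g (ψ j) : ℂ) * (inner ℂ (C (ψ j)) g : ℂ)) := by
            rw [h6, Complex.conj_re]
        _ ≤ B * ‖g‖^2 := h8 ▸ h7.1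
        _ ≤ B * ‖sqrtC‖^2 * ‖f‖^2 := by
            have h9 : ‖g‖^2 ≤ (‖sqrtC‖ * ‖f‖)^2 :=
              pow_le_pow_left₀ (norm_nonneg _) (sqrtC.le_opNorm f) 2
            nlinarith [norm_nonneg (sqrtC f), norm_nonneg f, opNorm_nonneg sqrtC]
  -- Finite partial-sum estimate
  have est : ∀ (a : J → ℂ) (s : Finset J),
      ‖∑ j ∈ s, a j • C (ψ j)‖ ≤ K * Real.sqrt (∑ j ∈ s, ‖a j‖^2) := by
    intro a s
    set g := ∑ j ∈ s, a j • C (ψ j) with hgdef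
    obtain ⟨m, hm, hmle⟩ := hfull g
    have hmnn : 0 ≤ m := hm.nonneg fun j => sq_nonneg _
    have h1 : (inner ℂ g g : ℂ) = ∑ j ∈ s, a j * inner ℂ g (C (ψ j)) := by
      conv_lhs => rw [hgdef]
      rw [inner_sum]
      simp [inner_smul_right]
      rfl
    have h2 : ‖g‖^2 ≤ ∑ j ∈ s, ‖a j‖ * ‖(inner ℂ (C (ψ j)) g : ℂ)‖ := by
      rw [← inner_self_eq_norm_sq (𝕜 := ℂ) g, h1]
      refine (Complex.re_le_norm _).trans ?_
      show ‖∑ j ∈ s, a j * (inner ℂ g (C (ψ j)) : ℂ)‖ ≤ _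
      refine (norm_sum_le _ _).trans ?_
      apply Finset.sum_le_sum
      intro j _
      rw [norm_mul, norm_inner_symm]
    have h3 : (∑ j ∈ s, ‖a j‖ * ‖(inner ℂ (C (ψ j)) g : ℂ)‖)^2
        ≤ (∑ j ∈ s, ‖a j‖^2) * (∑ j ∈ s, ‖(inner ℂ (C (ψ j)) g : ℂ)‖^2) :=
      Finset.sum_mul_sq_le_sq_mul_sq s _ _
    have h4 : ∑ j ∈ s, ‖(inner ℂ (C (ψ j)) g : ℂ)‖^2 ≤ m :=
      sum_le_hasSum s (fun j _ => sq_nonneg _) hm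
    have h5 : ∑ j ∈ s, ‖a j‖ * ‖(inner ℂ (C (ψ j)) g : ℂ)‖
        ≤ Real.sqrt (∑ j ∈ s, ‖a j‖^2) * (K * ‖g‖) := by
      have hs1 : 0 ≤ ∑ j ∈ s, ‖a j‖ * ‖(inner ℂ (C (ψ j)) g : ℂ)‖ :=
        Finset.sum_nonneg fun j _ => mul_nonneg (norm_nonneg _) (norm_nonneg _)
      have hs2 : (∑ j ∈ s, ‖a j‖ * ‖(inner ℂ (C (ψ j)) g : ℂ)‖)^2
          ≤ (∑ j ∈ s, ‖a j‖^2) * (B * ‖sqrtC‖^2 * ‖g‖^2) :=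
        h3.trans (by
          apply mul_le_mul_of_nonneg_left (h4.trans hmle)
          exact Finset.sum_nonneg fun j _ => sq_nonneg _)
      have := Real.sqrt_le_sqrt hs2
      rw [Real.sqrt_sq hs1] at this
      refine this.trans (le_of_eq ?_)
      rw [Real.sqrt_mul (Finset.sum_nonneg fun j _ => sq_nonneg _)]
      congr 1
      rw [hKdef]
      rw [show B * ‖sqrtC‖^2 * ‖g‖^2 = B * (‖sqrtC‖ * ‖g‖)^2 by ring,
        Real.sqrt_mul hB.le, Real.sqrt_sq (mul_nonneg (norm_nonneg _) (norm_nonneg _))]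
      ring
    rcases eq_or_lt_of_le (norm_nonneg g) with hg0 | hg0
    · rw [← hg0]
      positivity
    · have h6 : ‖g‖ * ‖g‖ ≤ (K * Real.sqrt (∑ j ∈ s, ‖a j‖^2)) * ‖g‖ := by
        have := h2.trans h5
        rw [pow_two] at this
        nlinarith [this]
      exact le_of_mul_le_mul_right h6 hg0
  -- lp facts
  have lp_sum_le : ∀ (a : lp (fun _ : J => ℂ) 2) (s : Finset J),
      ∑ j ∈ s, ‖a j‖^2 ≤ ‖a‖^2 := by
    intro a s
    have h := lp.sum_rpow_le_norm_rpow (p := 2) (by norm_num) a s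
    rw [show (2 : ℝ≥0∞).toReal = (2:ℝ) by norm_num] at h
    calc ∑ j ∈ s, ‖a j‖^2 = ∑ j ∈ s, ‖a j‖^(2:ℝ) := by
          apply Finset.sum_congr rfl
          intro j _
          rw [← Real.rpow_natCast ‖a j‖ 2]; norm_num
      _ ≤ ‖a‖^(2:ℝ) := h
      _ = ‖a‖^2 := by rw [← Real.rpow_natCast ‖a‖ 2]; norm_num
  have lp_summable : ∀ a : lp (fun _ : J => ℂ) 2, Summable fun j => ‖a j‖^2 := by
    intro a
    have h := lp.memℓp a
    rw [memℓp_gen_iff (by norm_num : 0 < (2:ℝ≥0∞).toReal)] at h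
    rw [show (2 : ℝ≥0∞).toReal = (2:ℝ) by norm_num] at h
    refine h.congr fun j => ?_
    rw [← Real.rpow_natCast ‖a j‖ 2]; norm_num
  -- summability of the synthesis series
  have hsummable : ∀ a : lp (fun _ : J => ℂ) 2, Summable fun j => a j • C (ψ j) := by
    intro a
    rw [summable_iff_vanishing_norm]
    intro ε hε
    have hδ : (0:ℝ) < (ε / (K+1))^2 := by positivity
    obtain ⟨s, hs⟩ := summable_iff_vanishing_norm.mp (lp_summable a) _ hδ
    refine ⟨s, fun t ht => ?_⟩
    have h1 := est (fun j => a j) t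
    have h2 := hs t ht
    have h2' : ∑ j ∈ t, ‖a j‖^2 ≤ (ε / (K+1))^2 := by
      have : |∑ j ∈ t, ‖a j‖^2| < (ε / (K+1))^2 := by rwa [Real.norm_eq_abs] at h2
      exact (le_abs_self _).trans this.le
    have h3 : Real.sqrt (∑ j ∈ t, ‖a j‖^2) ≤ ε / (K+1) := by
      refine (Real.sqrt_le_sqrt h2').trans (le_of_eq ?_)
      exact Real.sqrt_sq (by positivity)
    calc ‖∑ j ∈ t, a j • C (ψ j)‖ ≤ K * Real.sqrt (∑ j ∈ t, ‖a j‖^2) := h1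
      _ ≤ K * (ε / (K+1)) := mul_le_mul_of_nonneg_left h3 hK
      _ < ε := by
          rw [mul_div_assoc']
          rw [div_lt_iff₀ (by linarith)]
          nlinarith
  have hhs : ∀ a : lp (fun _ : J => ℂ) 2,
      HasSum (fun j => a j • C (ψ j)) (∑' j, a j • C (ψ j)) :=
    fun a => (hsummable a).hasSum
  -- the synthesis operator as a linear map
  set U₀ : lp (fun _ : J => ℂ) 2 →ₗ[ℂ] H :=
    { toFun := fun a => ∑' j, a j • C (ψ j)
      map_add' := by
        intro a b
        have h : HasSum (fun j => ((a + b) j) • C (ψ j))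
            ((∑' j, a j • C (ψ j)) + ∑' j, b j • C (ψ j)) := by
          have h := (hhs a).add (hhs b)
          have he : (fun j => ((a + b) j) • C (ψ j))
              = fun j => a j • C (ψ j) + b j • C (ψ j) := by
            funext j
            rw [lp.coeFn_add, Pi.add_apply, add_smul]
          rw [he]
          exact h
        exact h.tsum_eq
      map_smul' := by
        intro c a
        have h : HasSum (fun j => ((c • a) j) • C (ψ j)) (c • ∑' j, a j • C (ψ j)) := by
          have h := (hhs a).const_smul c
          have he : (fun j => ((c • a) j) • C (ψ j)) = fun j => c • (a j • C (ψ j)) := by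
            funext j
            rw [lp.coeFn_smul, Pi.smul_apply, smul_smul, smul_eq_mul]
          rw [he]
          exact h
        exact h.tsum_eq } with hU₀def
  have hbound : ∀ a : lp (fun _ : J => ℂ) 2, ‖U₀ a‖ ≤ K * ‖a‖ := by
    intro a
    have h := hhs a
    have h' : Filter.Tendsto (fun s : Finset J => ‖∑ j ∈ s, a j • C (ψ j)‖)
        Filter.atTop (nhds ‖∑' j, a j • C (ψ j)‖) := h.norm
    refine le_of_tendsto h' (Filter.Eventually.of_forall fun s => ?_)
    refine (est (fun j => a j) s).trans ?_
    apply mul_le_mul_of_nonneg_left _ hK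
    refine (Real.sqrt_le_sqrt (lp_sum_le a s)).trans (le_of_eq ?_)
    exact Real.sqrt_sq (norm_nonneg _)
  refine ⟨U₀.mkContinuous K hbound, fun a => ?_, ?_⟩
  · exact hhs a
  · exact U₀.mkContinuous_norm_le hK hbound
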